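/- (Abstract Korovkin theorem via P-statistical convergence.) Suppose P is a regular power series method and the Korovkin test hypotheses hold. Then for every ψ ∈ C(X), st_P-lim_{j→∞} ‖T_j(ψ) − ψ‖ = 0. -/

import Mathlib

open Filter Topology
open scoped ENNReal

/-- A power series method `P`: a sequence `(s j)` of nonnegative reals with `s 0 > 0`
whose power series `s(t) = ∑ s j * t ^ j` has radius of convergence `R`, `0 < R ≤ ∞`. -/
structure PowerSeriesMethod where
  s : ℕ → ℝ
  s_nonneg : ∀ j, 0 ≤ s j
  s0_pos : 0 < s 0
  R : ℝ≥0∞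
  R_pos : 0 < R
  summable_of_lt : ∀ t : ℝ, 0 < t → ENNReal.ofReal t < R → Summable fun j => s j * t ^ j
  not_summable_of_gt : ∀ t : ℝ, R < ENNReal.ofReal t → ¬ Summable fun j => s j * t ^ j

namespace PowerSeriesMethod

/-- The filter of `t` tending to `R` from the left (through `0 < t < R`);
if `R = ∞` this is `atTop`. -/
noncomputable def limFilter (P : PowerSeriesMethod) : Filter ℝ :=
  if P.R = ⊤ then Filter.atTop else nhdsWithin P.R.toReal (Set.Ioo 0 P.R.toReal)

/-- `s(t) = ∑ s j t ^ j`. -/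
noncomputable def sum (P : PowerSeriesMethod) (t : ℝ) : ℝ := ∑' j, P.s j * t ^ j

/-- The quotient `(∑_{j ∈ E} s j t ^ j) / s(t)` whose limit as `t → R⁻` is the `P`-density. -/
noncomputable def densityFn (P : PowerSeriesMethod) (E : Set ℕ) (t : ℝ) : ℝ :=
  (∑' j, Set.indicator E (fun j => P.s j * t ^ j) j) / P.sum t

/-- `E ⊆ ℕ` has `P`-density `d`. -/
def HasDensity (P : PowerSeriesMethod) (E : Set ℕ) (d : ℝ) : Prop :=
  Tendsto (P.densityFn E) P.limFilter (𝓝 d)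

/-- The power series method `P` is regular. -/
def Regular (P : PowerSeriesMethod) : Prop :=
  ∀ j, Tendsto (fun t => P.s j * t ^ j / P.sum t) P.limFilter (𝓝 0)

/-- The sequence `x` is `P`-statistically convergent to `L`. -/
def StatTendsto (P : PowerSeriesMethod) (x : ℕ → ℝ) (L : ℝ) : Prop :=
  ∀ ε : ℝ, 0 < ε → P.HasDensity {j | ε ≤ |x j - L|} 0

end PowerSeriesMethod

namespace PowerSeriesMethod
variable (P : PowerSeriesMethod)

lemma eventually_good : ∀ᶠ t in P.limFilter, 0 < t ∧ ENNReal.ofReal t < P.R := by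
  rw [limFilter]
  split_ifs with h
  · filter_upwards [eventually_gt_atTop (0:ℝ)] with t ht
    exact ⟨ht, h ▸ ENNReal.ofReal_lt_top⟩
  · filter_upwards [self_mem_nhdsWithin] with t ht
    exact ⟨ht.1, (ENNReal.ofReal_lt_iff_lt_toReal ht.1.le h).mpr ht.2⟩

lemma term_nonneg {t : ℝ} (ht : 0 < t) (j : ℕ) : 0 ≤ P.s j * t ^ j :=
  mul_nonneg (P.s_nonneg j) (pow_nonneg ht.le j)

lemma sum_pos {t : ℝ} (ht : 0 < t) (hlt : ENNReal.ofReal t < P.R) : 0 < P.sum t :=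
  Summable.tsum_pos (P.summable_of_lt t ht hlt) (P.term_nonneg ht) 0 (by simpa using P.s0_pos)

lemma densityFn_nonneg {E : Set ℕ} {t : ℝ} (ht : 0 < t) : 0 ≤ P.densityFn E t :=
  div_nonneg (tsum_nonneg fun j => Set.indicator_nonneg (fun i _ => P.term_nonneg ht i) j)
    (tsum_nonneg (P.term_nonneg ht))

lemma hasDensity_zero_mono {E F : Set ℕ} (hEF : E ⊆ F) (hF : P.HasDensity F 0) :
    P.HasDensity E 0 := by
  apply squeeze_zero' ?_ ?_ hF
  · filter_upwards [P.eventually_good] with t ht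
    exact P.densityFn_nonneg ht.1
  · filter_upwards [P.eventually_good] with t ht
    unfold densityFn
    rw [div_le_div_iff_of_pos_right (P.sum_pos ht.1 ht.2)]
    exact Summable.tsum_le_tsum
        (fun j => Set.indicator_le_indicator_of_subset hEF (fun i => P.term_nonneg ht.1 i) j)
        ((P.summable_of_lt t ht.1 ht.2).indicator E)
        ((P.summable_of_lt t ht.1 ht.2).indicator F)

lemma hasDensity_zero_empty : P.HasDensity ∅ 0 := by
  have : P.densityFn ∅ = fun _ => 0 := by
    funext t; simp [densityFn]
  rw [HasDensity, this]
  exact tendsto_const_nhds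

lemma hasDensity_zero_union {E F : Set ℕ} (hE : P.HasDensity E 0) (hF : P.HasDensity F 0) :
    P.HasDensity (E ∪ F) 0 := by
  apply squeeze_zero' ?_ ?_ (g := fun t => P.densityFn E t + P.densityFn F t)
    (by simpa using hE.add hF)
  · filter_upwards [P.eventually_good] with t ht
    exact P.densityFn_nonneg ht.1
  · filter_upwards [P.eventually_good] with t ht
    unfold densityFn
    rw [← add_div, div_le_div_iff_of_pos_right (P.sum_pos ht.1 ht.2)]
    rw [← Summable.tsum_add ((P.summable_of_lt t ht.1 ht.2).indicator E)
        ((P.summable_of_lt t ht.1 ht.2).indicator F)]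
    apply Summable.tsum_le_tsum _ ((P.summable_of_lt t ht.1 ht.2).indicator (E ∪ F))
      (((P.summable_of_lt t ht.1 ht.2).indicator E).add
        ((P.summable_of_lt t ht.1 ht.2).indicator F))
    intro j
    classical
    by_cases h1 : j ∈ E <;> by_cases h2 : j ∈ F <;>
      simp [Set.indicator_apply, h1, h2, P.term_nonneg ht.1 j]

lemma hasDensity_zero_biUnion {ι : Type*} (s : Finset ι) (E : ι → Set ℕ)
    (h : ∀ i ∈ s, P.HasDensity (E i) 0) : P.HasDensity (⋃ i ∈ s, E i) 0 := by
  classical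
  induction s using Finset.induction with
  | empty => simpa using P.hasDensity_zero_empty
  | insert _ _ hi ih =>
    rw [Finset.set_biUnion_insert]
    exact P.hasDensity_zero_union (h _ (Finset.mem_insert_self _ _))
      (ih fun i hi' => h i (Finset.mem_insert_of_mem hi'))

end PowerSeriesMethod


/-- abstract Korovkin theorem via `P`-statistical convergence:
under the Korovkin test hypotheses, `st_P-lim ‖T_j ψ − ψ‖ = 0` for every `ψ ∈ C(X)`. -/
theorem abstract_korovkin_pstat (P : PowerSeriesMethod) (hP : P.Regular)
    {X : Type*} [TopologicalSpace X] [CompactSpace X] [T2Space X] [Nontrivial X]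
    (d : ℕ) (ψ g : Fin d → C(X, ℝ))
    (hQpos : ∀ x y : X, 0 ≤ ∑ l, g l x * ψ l y)
    (hQzero : ∀ x y : X, (∑ l, g l x * ψ l y) = 0 ↔ y = x)
    (T : ℕ → C(X, ℝ) →ₗ[ℝ] C(X, ℝ))
    (hTpos : ∀ j (f : C(X, ℝ)), 0 ≤ f → 0 ≤ T j f)
    (hTconv : ∀ l, P.StatTendsto (fun j => ‖T j (ψ l) - ψ l‖) 0) :
    ∀ f : C(X, ℝ), P.StatTendsto (fun j => ‖T j f - f‖) 0 := by
  classical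
  intro f ε hε
  obtain ⟨x₁, x₂, h12⟩ := exists_pair_ne X
  rcases Nat.eq_zero_or_pos d with hd0 | hd0
  · exact absurd ((hQzero x₁ x₂).mp (by subst hd0; simp)).symm h12
  have hdpos : (0:ℝ) < d := by exact_mod_cast hd0
  -- the test function Q x
  obtain ⟨Q, hQapp, hQTdiff⟩ :
      ∃ Q : X → C(X, ℝ), (∀ x y, Q x y = ∑ l, g l x * ψ l y) ∧
        (∀ j x, T j (Q x) - Q x = ∑ l, (g l x) • (T j (ψ l) - ψ l)) := by
    refine ⟨fun x => ∑ l, (g l x) • ψ l, fun x y => by simp, fun j x => ?_⟩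
    show T j (∑ l, (g l x) • ψ l) - ∑ l, (g l x) • ψ l = _
    rw [map_sum, ← Finset.sum_sub_distrib]
    exact Finset.sum_congr rfl fun l _ => by rw [map_smul, smul_sub]
  have hQnonneg : ∀ x y, 0 ≤ Q x y := fun x y => (hQapp x y) ▸ hQpos x y
  have hQzero' : ∀ x y, Q x y = 0 ↔ y = x := fun x y => (hQapp x y) ▸ hQzero x y
  -- the strictly positive function u
  obtain ⟨u, huapp, huTdiff⟩ :
      ∃ u : C(X, ℝ), (∀ y, u y = Q x₁ y + Q x₂ y) ∧
        (∀ j, T j u - u = (T j (Q x₁) - Q x₁) + (T j (Q x₂) - Q x₂)) :=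
    ⟨Q x₁ + Q x₂, fun y => rfl, fun j => by rw [map_add]; abel⟩
  have hupos : ∀ y, 0 < u y := by
    intro y
    have h1 := hQnonneg x₁ y
    have h2 := hQnonneg x₂ y
    have hne : Q x₁ y ≠ 0 ∨ Q x₂ y ≠ 0 := by
      by_contra hcon
      push_neg at hcon
      exact h12 (((hQzero' x₁ y).mp hcon.1).symm.trans ((hQzero' x₂ y).mp hcon.2))
    rw [huapp]
    rcases hne with h | h
    · have := lt_of_le_of_ne h1 (Ne.symm h); linarith
    · have := lt_of_le_of_ne h2 (Ne.symm h); linarith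
  -- minimum of u
  obtain ⟨z, -, hz⟩ := isCompact_univ.exists_isMinOn Set.univ_nonempty u.continuous.continuousOn
  obtain ⟨c, hc, hcu⟩ : ∃ c : ℝ, 0 < c ∧ ∀ y, c ≤ u y :=
    ⟨u z, hupos z, fun y => hz (Set.mem_univ y)⟩
  have hunorm : (0:ℝ) ≤ ‖u‖ := norm_nonneg u
  obtain ⟨ε₀, hε₀def, hε₀⟩ : ∃ e : ℝ, e = ε * c / (2 * (‖u‖ + 1)) ∧ 0 < e :=
    ⟨_, rfl, div_pos (mul_pos hε hc) (by positivity)⟩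
  -- the auxiliary function hf
  obtain ⟨hf, hfdef⟩ : ∃ h : X × X → ℝ, ∀ p, h p = f p.2 - f p.1 / u p.1 * u p.2 :=
    ⟨_, fun _ => rfl⟩
  have hfcont : Continuous hf := by
    have heq : hf = fun p : X × X => f p.2 - f p.1 / u p.1 * u p.2 := funext hfdef
    rw [heq]
    apply Continuous.sub (f.continuous.comp continuous_snd)
    exact ((f.continuous.comp continuous_fst).div (u.continuous.comp continuous_fst)
      (fun p => (hupos p.1).ne')).mul (u.continuous.comp continuous_snd)
  have hfdiag : ∀ x : X, hf (x, x) = 0 := by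
    intro x
    rw [hfdef]
    show f x - f x / u x * u x = 0
    rw [div_mul_cancel₀ _ (hupos x).ne', sub_self]
  -- the Korovkin estimate constant K
  have hK : ∃ K : ℝ, 0 ≤ K ∧ ∀ x y : X, |hf (x, y)| ≤ ε₀ + K * Q x y := by
    set A : Set (X × X) := {p : X × X | ε₀ ≤ |hf p|} with hAdef
    have hAclosed : IsClosed A := isClosed_le continuous_const hfcont.abs
    rcases Set.eq_empty_or_nonempty A with hA | hA
    · refine ⟨0, le_refl 0, fun x y => ?_⟩
      have hmem : (x, y) ∉ A := hA ▸ Set.notMem_empty _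
      simp only [hAdef, Set.mem_setOf_eq, not_le] at hmem
      have h4 : 0 ≤ Q x y := hQnonneg x y
      linarith
    · have hAcomp : IsCompact A := hAclosed.isCompact
      have hQc : Continuous fun p : X × X => Q p.1 p.2 := by
        have heq : (fun p : X × X => Q p.1 p.2) = fun p : X × X => ∑ l, g l p.1 * ψ l p.2 := by
          funext p; exact hQapp p.1 p.2
        rw [heq]
        exact continuous_finset_sum _ fun l _ =>
          ((g l).continuous.comp continuous_fst).mul ((ψ l).continuous.comp continuous_snd)
      obtain ⟨p₀, hp₀A, hp₀⟩ := hAcomp.exists_isMinOn hA hQc.continuousOn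
      have hm : 0 < Q p₀.1 p₀.2 := by
        rcases (hQnonneg p₀.1 p₀.2).eq_or_lt with h0 | h0
        · exfalso
          have h2 : p₀.2 = p₀.1 := (hQzero' p₀.1 p₀.2).mp h0.symm
          have h3 : hf p₀ = 0 := by
            calc hf p₀ = hf (p₀.1, p₀.2) := rfl
              _ = hf (p₀.1, p₀.1) := by rw [h2]
              _ = 0 := hfdiag _
          have h4 : ε₀ ≤ |hf p₀| := hp₀A
          rw [h3] at h4
          simp at h4
          linarith
        · exact h0
      obtain ⟨pM, -, hpM⟩ :=
        isCompact_univ.exists_isMaxOn Set.univ_nonempty hfcont.abs.continuousOn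
      set M : ℝ := |hf pM| with hMdef
      have hM0 : 0 ≤ M := abs_nonneg _
      refine ⟨M / Q p₀.1 p₀.2, div_nonneg hM0 hm.le, fun x y => ?_⟩
      by_cases hxy : (x, y) ∈ A
      · have h1 : |hf (x, y)| ≤ M := hpM (Set.mem_univ (x, y))
        have h2 : Q p₀.1 p₀.2 ≤ Q x y := hp₀ hxy
        have h3 : M / Q p₀.1 p₀.2 * Q p₀.1 p₀.2 ≤ M / Q p₀.1 p₀.2 * Q x y :=
          mul_le_mul_of_nonneg_left h2 (div_nonneg hM0 hm.le)
        rw [div_mul_cancel₀ _ hm.ne'] at h3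
        linarith
      · simp only [hAdef, Set.mem_setOf_eq, not_le] at hxy
        have h4 : 0 ≤ M / Q p₀.1 p₀.2 * Q x y :=
          mul_nonneg (div_nonneg hM0 hm.le) (hQnonneg x y)
        linarith
  obtain ⟨K, hK0, hKb⟩ := hK
  -- monotonicity of T j
  have hTmono : ∀ j (a b : C(X, ℝ)), a ≤ b → T j a ≤ T j b := by
    intro j a b hab
    have h := hTpos j (b - a) (sub_nonneg.mpr hab)
    rw [map_sub] at h
    exact sub_nonneg.mp h
  have hS0 : ∀ j, (0:ℝ) ≤ ∑ l, ‖T j (ψ l) - ψ l‖ :=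
    fun j => Finset.sum_nonneg fun l _ => norm_nonneg _
  obtain ⟨G, hGdef, hG0⟩ : ∃ G : ℝ, G = ∑ l, ‖g l‖ ∧ 0 ≤ G :=
    ⟨_, rfl, Finset.sum_nonneg fun l _ => norm_nonneg _⟩
  have hQTb : ∀ j x, ‖T j (Q x) - Q x‖ ≤ G * ∑ l, ‖T j (ψ l) - ψ l‖ := by
    intro j x
    rw [hQTdiff j x]
    refine (norm_sum_le _ _).trans ?_
    calc ∑ l, ‖(g l x) • (T j (ψ l) - ψ l)‖
        = ∑ l, |g l x| * ‖T j (ψ l) - ψ l‖ := by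
          refine Finset.sum_congr rfl fun l _ => ?_
          rw [norm_smul (g l x) (T j (ψ l) - ψ l), Real.norm_eq_abs]
      _ ≤ ∑ l, G * ‖T j (ψ l) - ψ l‖ := by
          refine Finset.sum_le_sum fun l _ => mul_le_mul_of_nonneg_right ?_ (norm_nonneg _)
          calc |g l x| = ‖g l x‖ := (Real.norm_eq_abs _).symm
            _ ≤ ‖g l‖ := (g l).norm_coe_le_norm x
            _ ≤ G := hGdef ▸ Finset.single_le_sum (fun i _ => norm_nonneg (g i)) (Finset.mem_univ l)
      _ = G * ∑ l, ‖T j (ψ l) - ψ l‖ := by rw [Finset.mul_sum]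
  -- pointwise sandwich of f
  have hfb : ∀ x : X,
      (f x / u x) • u - ((ε₀ / c) • u + K • Q x) ≤ f ∧
      f ≤ (f x / u x) • u + ((ε₀ / c) • u + K • Q x) := by
    intro x
    have key : ∀ y, |f y - f x / u x * u y| ≤ ε₀ / c * u y + K * Q x y := by
      intro y
      have h1 := hKb x y
      rw [hfdef] at h1
      have h1' : |f y - f x / u x * u y| ≤ ε₀ + K * Q x y := h1
      have h2 : ε₀ ≤ ε₀ / c * u y := by
        have h3 : ε₀ / c * c ≤ ε₀ / c * u y :=
          mul_le_mul_of_nonneg_left (hcu y) (by positivity)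
        rwa [div_mul_cancel₀ _ hc.ne'] at h3
      linarith
    constructor <;> rw [ContinuousMap.le_def] <;> intro y <;>
      · have h := abs_le.mp (key y)
        simp only [ContinuousMap.sub_apply, ContinuousMap.add_apply, ContinuousMap.smul_apply,
          smul_eq_mul]
        obtain ⟨hle, hre⟩ := h
        linarith
  -- main pointwise estimate
  obtain ⟨C, hCdef, hC0⟩ :
      ∃ C : ℝ, C = ε₀ / c * (2 * G) + K * G + ‖f‖ / c * (2 * G) ∧ 0 ≤ C :=
    ⟨_, rfl, add_nonneg (add_nonneg
      (mul_nonneg (div_nonneg hε₀.le hc.le) (by positivity))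
      (mul_nonneg hK0 hG0))
      (mul_nonneg (div_nonneg (norm_nonneg f) hc.le) (by positivity))⟩
  have hmain : ∀ (j : ℕ) (x : X), |T j f x - f x| ≤
      ε₀ / c * ‖u‖ + C * ∑ l, ‖T j (ψ l) - ψ l‖ := by
    intro j x
    obtain ⟨Sj, hSjdef, hSj0⟩ : ∃ S : ℝ, S = ∑ l, ‖T j (ψ l) - ψ l‖ ∧ 0 ≤ S :=
      ⟨_, rfl, hS0 j⟩
    rw [← hSjdef]
    obtain ⟨hl, hr⟩ := hfb x
    have hTlx := ContinuousMap.le_def.mp (hTmono j _ _ hl) x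
    have hTrx := ContinuousMap.le_def.mp (hTmono j _ _ hr) x
    rw [map_sub, map_add, map_smul, map_smul, map_smul] at hTlx
    rw [map_add, map_add, map_smul, map_smul, map_smul] at hTrx
    simp only [ContinuousMap.sub_apply, ContinuousMap.add_apply, ContinuousMap.smul_apply,
      smul_eq_mul] at hTlx hTrx
    have hTu : |T j u x - u x| ≤ 2 * (G * Sj) := by
      have h2 : ‖T j u - u‖ ≤ 2 * (G * Sj) := by
        rw [huTdiff j]
        refine (norm_add_le _ _).trans ?_
        have hb1 := hQTb j x₁
        have hb2 := hQTb j x₂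
        rw [← hSjdef] at hb1 hb2
        linarith
      calc |T j u x - u x| = ‖(T j u - u) x‖ := by
            rw [ContinuousMap.sub_apply, Real.norm_eq_abs]
        _ ≤ ‖T j u - u‖ := ContinuousMap.norm_coe_le_norm _ x
        _ ≤ 2 * (G * Sj) := h2
    have hQxx : Q x x = 0 := (hQzero' x x).mpr rfl
    have hTQ : |T j (Q x) x| ≤ G * Sj := by
      calc |T j (Q x) x| = ‖(T j (Q x) - Q x) x‖ := by
            rw [ContinuousMap.sub_apply, hQxx, sub_zero, Real.norm_eq_abs]
        _ ≤ ‖T j (Q x) - Q x‖ := ContinuousMap.norm_coe_le_norm _ x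
        _ ≤ G * Sj := hSjdef ▸ hQTb j x
    have hax : |f x / u x| ≤ ‖f‖ / c := by
      rw [abs_div, abs_of_pos (hupos x)]
      exact div_le_div₀ (norm_nonneg f)
        (by rw [← Real.norm_eq_abs]; exact f.norm_coe_le_norm x) hc (hcu x)
    have hux : u x ≤ ‖u‖ := by
      calc u x ≤ |u x| := le_abs_self _
        _ = ‖u x‖ := (Real.norm_eq_abs _).symm
        _ ≤ ‖u‖ := u.norm_coe_le_norm x
    have hTux : T j u x ≤ ‖u‖ + 2 * (G * Sj) := by
      have := abs_le.mp hTu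
      linarith
    have habs1 : |T j f x - f x / u x * T j u x| ≤
        ε₀ / c * (‖u‖ + 2 * (G * Sj)) + K * (G * Sj) := by
      have hb1 : ε₀ / c * T j u x ≤ ε₀ / c * (‖u‖ + 2 * (G * Sj)) :=
        mul_le_mul_of_nonneg_left hTux (by positivity)
      have hb2 : K * T j (Q x) x ≤ K * (G * Sj) :=
        mul_le_mul_of_nonneg_left (abs_le.mp hTQ).2 hK0
      rw [abs_le]
      constructor <;> linarith
    have h6 : |f x / u x * (T j u x - u x)| ≤ ‖f‖ / c * (2 * (G * Sj)) := by
      rw [abs_mul]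
      apply mul_le_mul hax hTu (abs_nonneg _)
      exact div_nonneg (norm_nonneg f) hc.le
    have h7 : f x / u x * u x = f x := div_mul_cancel₀ _ (hupos x).ne'
    have heq2 : T j f x - f x =
        (T j f x - f x / u x * T j u x) + f x / u x * (T j u x - u x) := by
      rw [mul_sub]; linarith
    calc |T j f x - f x|
        ≤ |T j f x - f x / u x * T j u x| + |f x / u x * (T j u x - u x)| := by
          rw [heq2]; exact abs_add_le _ _
      _ ≤ (ε₀ / c * (‖u‖ + 2 * (G * Sj)) + K * (G * Sj)) + ‖f‖ / c * (2 * (G * Sj)) :=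
          add_le_add habs1 h6
      _ = ε₀ / c * ‖u‖ + C * Sj := by rw [hCdef]; ring
  -- norm estimate
  have hnorm : ∀ j, ‖T j f - f‖ ≤ ε₀ / c * ‖u‖ + C * ∑ l, ‖T j (ψ l) - ψ l‖ := by
    intro j
    refine (ContinuousMap.norm_le _ ?_).mpr fun x => ?_
    · have h1 := hS0 j
      have h2 : 0 ≤ ε₀ / c * ‖u‖ := mul_nonneg (div_nonneg hε₀.le hc.le) hunorm
      have h3 : 0 ≤ C * ∑ l, ‖T j (ψ l) - ψ l‖ := mul_nonneg hC0 h1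
      linarith
    · rw [ContinuousMap.sub_apply, Real.norm_eq_abs]
      exact hmain j x
  have hhalf : ε₀ / c * ‖u‖ ≤ ε / 2 := by
    have h1 : ε₀ / c = ε / (2 * (‖u‖ + 1)) := by
      rw [hε₀def]; field_simp
    rw [h1, div_mul_eq_mul_div, div_le_div_iff₀ (by positivity) (by norm_num)]
    nlinarith
  -- conclude via density
  obtain ⟨ε', hε'def, hε'⟩ : ∃ e : ℝ, e = ε / (2 * (C + 1) * d) ∧ 0 < e :=
    ⟨_, rfl, div_pos hε (by positivity)⟩
  apply P.hasDensity_zero_mono (F := ⋃ l ∈ Finset.univ (α := Fin d),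
    {j : ℕ | ε' ≤ |‖T j (ψ l) - ψ l‖ - 0|})
  · intro j hj
    simp only [Set.mem_setOf_eq, sub_zero, abs_of_nonneg (norm_nonneg _)] at hj
    have h1 : ε ≤ ε / 2 + (C + 1) * ∑ l, ‖T j (ψ l) - ψ l‖ := by
      have h2 := hnorm j
      have h3 : C * ∑ l, ‖T j (ψ l) - ψ l‖ ≤ (C + 1) * ∑ l, ‖T j (ψ l) - ψ l‖ :=
        mul_le_mul_of_nonneg_right (by linarith) (hS0 j)
      linarith
    by_contra hcon
    simp only [Set.mem_iUnion, Set.mem_setOf_eq, not_exists, not_le, sub_zero,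
      Finset.mem_univ, exists_true_left] at hcon
    have hSlt : ∑ l, ‖T j (ψ l) - ψ l‖ < d * ε' := by
      calc ∑ l, ‖T j (ψ l) - ψ l‖ < ∑ _l : Fin d, ε' := by
            refine Finset.sum_lt_sum_of_nonempty ?_ fun l _ => ?_
            · exact Finset.univ_nonempty_iff.mpr ⟨⟨0, hd0⟩⟩
            · have h5 := hcon l
              rwa [abs_of_nonneg (norm_nonneg _)] at h5
        _ = d * ε' := by simp [Finset.sum_const, Finset.card_univ, nsmul_eq_mul]
    have hde : (d : ℝ) * ε' = ε / (2 * (C + 1)) := by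
      rw [hε'def]
      field_simp
    rw [hde] at hSlt
    have h8 : (C + 1) * ∑ l, ‖T j (ψ l) - ψ l‖ < (C + 1) * (ε / (2 * (C + 1))) :=
      mul_lt_mul_of_pos_left hSlt (by linarith)
    have h9 : (C + 1) * (ε / (2 * (C + 1))) = ε / 2 := by
      have hne : C + 1 ≠ 0 := by linarith
      field_simp
    rw [h9] at h8
    linarith
  · exact P.hasDensity_zero_biUnion _ _ fun l _ => hTconv l ε' hε'
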